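/- Let N=(G,r,p,q,I) be a network in which G is a finite connected simple graph, and let f be a flow of intensity I from p to q. Then f satisfies Kirchhoff's cycle law if and only if W(f) ≤ W(g) for every flow g of intensity I from p to q. -/

import Mathlib

open scoped ENNReal Classical

/-- `f` is a flow of intensity `I` from `p` to `q` in the graph `G`:
it is antisymmetric, vanishes on non-adjacent pairs, and satisfies
Kirchhoff's node law at every vertex (the family of values on edges leaving a
vertex is summable, with sum `I` at `p`, `-I` at `q` and `0` elsewhere). -/
def IsFlow {V : Type} (G : SimpleGraph V) (p q : V) (I : ℝ) (f : V → V → ℝ) : Prop :=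
  (∀ x y, f x y = - f y x) ∧
  (∀ x y, ¬ G.Adj x y → f x y = 0) ∧
  ∀ x : V, HasSum (fun y : G.neighborSet x => f x y)
    (if x = p then I else if x = q then -I else 0)

/-- The energy `W(f) = ∑_{xy ∈ E} f(x,y)² r(xy)`; each edge of `G` corresponds to
exactly two ordered adjacent pairs contributing the same amount, whence the
division by 2. Valued in `ℝ≥0∞`. -/
noncomputable def energy {V : Type} (G : SimpleGraph V) (r : Sym2 V → ℝ)
    (f : V → V → ℝ) : ℝ≥0∞ :=
  (∑' e : {e : V × V // G.Adj e.1 e.2},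
      ENNReal.ofReal (f e.1.1 e.1.2 ^ 2 * r s(e.1.1, e.1.2))) / 2

/-- Kirchhoff's cycle law: around every (finite) cycle the potential
differences `f(x,y) · r(xy)` sum to zero. -/
def CycleLaw {V : Type} (G : SimpleGraph V) (r : Sym2 V → ℝ) (f : V → V → ℝ) : Prop :=
  ∀ (v : V) (c : G.Walk v v), c.IsCycle →
    (c.darts.map (fun d => f d.toProd.1 d.toProd.2 * r d.edge)).sum = 0

/-- `f` is cut-respecting: for every set `X` of vertices containing both `p` and `q`
such that only finitely many edges join `X` to its complement, the net flow
across the cut is zero. -/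
def CutRespecting {V : Type} (G : SimpleGraph V) (p q : V) (f : V → V → ℝ) : Prop :=
  ∀ X : Set V, p ∈ X → q ∈ X →
    ∀ hX : {e : V × V | e.1 ∈ X ∧ e.2 ∉ X ∧ G.Adj e.1 e.2}.Finite,
      ∑ e ∈ hX.toFinset, f e.1 e.2 = 0

namespace CLME

set_option linter.unusedSectionVars false
variable {V : Type} [Fintype V] {G : SimpleGraph V}

noncomputable def Eadj (G : SimpleGraph V) [Fintype V] : Finset (V × V) :=
  Finset.univ.filter (fun e : V × V => G.Adj e.1 e.2)

lemma mem_Eadj {e : V × V} : e ∈ Eadj G ↔ G.Adj e.1 e.2 := by simp [Eadj]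

noncomputable def Q (G : SimpleGraph V) (r : Sym2 V → ℝ) (f : V → V → ℝ) : ℝ :=
  ∑ e ∈ Eadj G, f e.1 e.2 ^ 2 * r s(e.1, e.2)

noncomputable def S (G : SimpleGraph V) (r : Sym2 V → ℝ) (f g : V → V → ℝ) : ℝ :=
  ∑ e ∈ Eadj G, f e.1 e.2 * g e.1 e.2 * r s(e.1, e.2)

lemma Q_nonneg (r : Sym2 V → ℝ) (hr : ∀ e ∈ G.edgeSet, 0 < r e) (f : V → V → ℝ) :
    0 ≤ Q G r f := by
  apply Finset.sum_nonneg
  intro e he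
  rw [mem_Eadj] at he
  exact mul_nonneg (sq_nonneg _) (hr _ (G.mem_edgeSet.2 he)).le

lemma energy_eq (r : Sym2 V → ℝ) (hr : ∀ e ∈ G.edgeSet, 0 < r e) (f : V → V → ℝ) :
    energy G r f = ENNReal.ofReal (Q G r f) / 2 := by
  unfold energy Q
  congr 1
  rw [tsum_fintype, ← Finset.sum_subtype (Eadj G) (fun e => mem_Eadj)
    (fun e => ENNReal.ofReal (f e.1 e.2 ^ 2 * r s(e.1, e.2))),
    ENNReal.ofReal_sum_of_nonneg]
  intro e he
  rw [mem_Eadj] at he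
  exact mul_nonneg (sq_nonneg _) (hr _ (G.mem_edgeSet.2 he)).le

lemma Q_expand (r : Sym2 V → ℝ) (f h : V → V → ℝ) (t : ℝ) :
    Q G r (fun x y => f x y + t * h x y)
      = Q G r f + 2 * t * S G r f h + t ^ 2 * Q G r h := by
  unfold Q S
  rw [Finset.mul_sum, Finset.mul_sum, ← Finset.sum_add_distrib, ← Finset.sum_add_distrib]
  exact Finset.sum_congr rfl fun e _ => by ring

lemma energy_le_energy_iff (r : Sym2 V → ℝ) (hr : ∀ e ∈ G.edgeSet, 0 < r e)
    (f g : V → V → ℝ) : energy G r f ≤ energy G r g ↔ Q G r f ≤ Q G r g := by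
  rw [energy_eq r hr, energy_eq r hr]
  constructor
  · intro h
    have h2 : ENNReal.ofReal (Q G r f) / 2 * 2 ≤ ENNReal.ofReal (Q G r g) / 2 * 2 :=
      mul_le_mul_left h 2
    rw [ENNReal.div_mul_cancel (by norm_num) (by norm_num),
      ENNReal.div_mul_cancel (by norm_num) (by norm_num)] at h2
    exact (ENNReal.ofReal_le_ofReal_iff (Q_nonneg r hr g)).1 h2
  · intro h
    exact ENNReal.div_le_div_right (ENNReal.ofReal_le_ofReal h) 2

lemma sum_nbhd_eq_sum_univ {f : V → V → ℝ} (h0 : ∀ x y, ¬ G.Adj x y → f x y = 0) (x : V) :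
    ∑ y : G.neighborSet x, f x y = ∑ y : V, f x y := by
  rw [← Finset.sum_subtype (Finset.univ.filter (fun y => G.Adj x y))
    (fun y => by simp [SimpleGraph.mem_neighborSet]) (fun y => f x y)]
  exact Finset.sum_filter_of_ne (fun y _ hy => by
    by_contra hadj; exact hy (h0 x y hadj))

lemma net_of_isFlow {p q : V} {I : ℝ} {f : V → V → ℝ} (hf : IsFlow G p q I f) (x : V) :
    ∑ y : V, f x y = if x = p then I else if x = q then -I else 0 := by
  have h1 := hf.2.2 x
  have h2 := hasSum_fintype (fun y : G.neighborSet x => f x y)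
  rw [h1.unique h2]
  exact (sum_nbhd_eq_sum_univ hf.2.1 x).symm

lemma isFlow_of_net {p q : V} {I : ℝ} {f : V → V → ℝ}
    (hsym : ∀ x y, f x y = - f y x) (h0 : ∀ x y, ¬ G.Adj x y → f x y = 0)
    (hnet : ∀ x : V, ∑ y : V, f x y = if x = p then I else if x = q then -I else 0) :
    IsFlow G p q I f := by
  refine ⟨hsym, h0, fun x => ?_⟩
  have h2 := hasSum_fintype (fun y : G.neighborSet x => f x y)
  rwa [sum_nbhd_eq_sum_univ h0 x, hnet x] at h2

/-- sum of `f·r` along the darts of a walk -/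
def wsum (r : Sym2 V → ℝ) (f : V → V → ℝ) {u v : V} (w : G.Walk u v) : ℝ :=
  (w.darts.map (fun d => f d.toProd.1 d.toProd.2 * r d.edge)).sum

@[simp] lemma wsum_nil (r : Sym2 V → ℝ) (f : V → V → ℝ) {u : V} :
    wsum r f (SimpleGraph.Walk.nil : G.Walk u u) = 0 := rfl

@[simp] lemma wsum_cons (r : Sym2 V → ℝ) (f : V → V → ℝ) {u v w : V}
    (h : G.Adj u v) (p : G.Walk v w) :
    wsum r f (SimpleGraph.Walk.cons h p) = f u v * r s(u, v) + wsum r f p := rfl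

@[simp] lemma wsum_append (r : Sym2 V → ℝ) (f : V → V → ℝ) {u v w : V}
    (p : G.Walk u v) (p' : G.Walk v w) :
    wsum r f (p.append p') = wsum r f p + wsum r f p' := by
  unfold wsum
  rw [SimpleGraph.Walk.darts_append, List.map_append, List.sum_append]

lemma wsum_reverse (r : Sym2 V → ℝ) {f : V → V → ℝ} (hsym : ∀ x y, f x y = - f y x)
    {u v : V} (p : G.Walk u v) : wsum r f p.reverse = - wsum r f p := by
  unfold wsum
  rw [SimpleGraph.Walk.darts_reverse, List.map_reverse, List.sum_reverse, List.map_map,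
    ← neg_one_mul, ← List.sum_map_mul_left]
  congr 1
  apply List.map_congr_left
  intro d _
  simp only [Function.comp_apply, SimpleGraph.Dart.edge_symm]
  have h1 : d.symm.toProd = d.toProd.swap := rfl
  rw [h1]
  simp only [Prod.fst_swap, Prod.snd_swap]
  rw [hsym d.toProd.2 d.toProd.1]
  ring

lemma wsum_closed (r : Sym2 V → ℝ) {f : V → V → ℝ} (hsym : ∀ x y, f x y = - f y x)
    (hcl : CycleLaw G r f) :
    ∀ (n : ℕ) (v : V) (c : G.Walk v v), c.length = n → wsum r f c = 0 := by
  intro n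
  induction n using Nat.strong_induction_on with
  | _ n IH =>
    intro v c hlen
    by_cases hnd : c.support.tail.Nodup
    · cases c with
      | nil => simp
      | cons hadj w =>
        rename_i b
        have hnd' : w.support.Nodup := by simpa using hnd
        have hw : w.IsPath := SimpleGraph.Walk.IsPath.mk' hnd'
        by_cases hedge : s(v, b) ∈ w.edges
        · -- degenerate: the walk is v-b-v
          cases w with
          | nil => exact absurd hadj (G.loopless.irrefl v)
          | cons hadj2 w2 =>
            rename_i x
            rw [SimpleGraph.Walk.edges_cons, List.mem_cons] at hedge
            rcases hedge with heq | hmem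
            · rw [Sym2.eq_iff] at heq
              rcases heq with ⟨hvb, _⟩ | ⟨hvx, _⟩
              · exact absurd (hvb ▸ hadj) (G.loopless.irrefl v)
              · subst hvx
                have h1 : w2.support.Nodup := by
                  have := hnd'
                  rw [SimpleGraph.Walk.support_cons, List.nodup_cons] at this
                  exact this.2
                cases w2 with
                | nil =>
                  simp only [wsum_cons, wsum_nil]
                  have hbv : s(b, v) = s(v, b) := Sym2.eq_swap
                  rw [hbv, hsym b v]; ring
                | cons hadj3 w3 =>
                  exfalso
                  rw [SimpleGraph.Walk.support_cons, List.nodup_cons] at h1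
                  exact h1.1 w3.end_mem_support
            · exfalso
              have hb : b ∈ w2.support := by
                have : s(b, v) ∈ w2.edges := by rwa [Sym2.eq_swap] at hmem
                exact w2.fst_mem_support_of_mem_edges this
              have := hnd'
              rw [SimpleGraph.Walk.support_cons, List.nodup_cons] at this
              exact this.1 hb
        · exact hcl v (SimpleGraph.Walk.cons hadj w)
            ((SimpleGraph.Walk.cons_isCycle_iff w hadj).2 ⟨hw, hedge⟩)
    · -- there is a repeated interior vertex; split the walk
      rw [List.nodup_iff_count_le_one] at hnd
      push_neg at hnd
      obtain ⟨u, hu⟩ := hnd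
      have hu2 : 2 ≤ c.support.tail.count u := by omega
      have humem : u ∈ c.support :=
        List.mem_of_mem_tail (List.count_pos_iff.1 (by omega))
      have hsum : wsum r f (c.rotate u humem) = wsum r f c :=
        List.Perm.sum_eq (List.Perm.map _ (c.rotate_darts u humem).perm)
      have hlen2 : (c.rotate u humem).length = n := by
        rw [← hlen, ← SimpleGraph.Walk.length_darts, ← SimpleGraph.Walk.length_darts]
        exact (c.rotate_darts u humem).perm.length_eq
      have hcount : 2 ≤ (c.rotate u humem).support.tail.count u := by
        rw [(c.support_rotate u humem).perm.count_eq]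
        exact hu2
      rw [← hsum]
      generalize c.rotate u humem = c' at hlen2 hcount
      clear hsum hu2 hu humem hlen c
      cases c' with
      | nil => simp at hcount
      | cons hadj w =>
        rename_i b
        rw [SimpleGraph.Walk.support_cons, List.tail_cons] at hcount
        have humem2 : u ∈ w.support := List.count_pos_iff.1 (by omega)
        have hspec := w.take_spec humem2
        have hcnt1 := w.count_support_takeUntil_eq_one humem2
        have hd2 : 1 ≤ (w.dropUntil u humem2).support.tail.count u := by
          have hc2 : w.support.count u =
              (w.takeUntil u humem2).support.count u
                + (w.dropUntil u humem2).support.tail.count u := by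
            conv_lhs => rw [← hspec]
            rw [SimpleGraph.Walk.support_append, List.count_append]
          omega
        have hd2len : 1 ≤ (w.dropUntil u humem2).length := by
          have h1 : u ∈ (w.dropUntil u humem2).support.tail :=
            List.count_pos_iff.1 (by omega)
          have h2 : (w.dropUntil u humem2).support.tail.length
              = (w.dropUntil u humem2).length := by
            rw [← SimpleGraph.Walk.map_snd_darts, List.length_map,
              SimpleGraph.Walk.length_darts]
          have := List.length_pos_iff.2 (List.ne_nil_of_mem h1)
          omega
        have hlenw : w.length = (w.takeUntil u humem2).length
            + (w.dropUntil u humem2).length := by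
          conv_lhs => rw [← hspec]
          rw [SimpleGraph.Walk.length_append]
        have hlc : n = w.length + 1 := by
          rw [← hlen2, SimpleGraph.Walk.length_cons]
        have h1 : wsum r f (SimpleGraph.Walk.cons hadj (w.takeUntil u humem2)) = 0 := by
          apply IH ((w.takeUntil u humem2).length + 1) (by omega) u _ 
          rw [SimpleGraph.Walk.length_cons]
        have h2 : wsum r f (w.dropUntil u humem2) = 0 :=
          IH ((w.dropUntil u humem2).length) (by omega) u _ rfl
        have hw : wsum r f w = wsum r f (w.takeUntil u humem2)
            + wsum r f (w.dropUntil u humem2) := by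
          conv_lhs => rw [← hspec]
          rw [wsum_append]
        rw [wsum_cons] at h1 ⊢
        rw [hw]
        linarith

lemma exists_potential (hconn : G.Connected) (r : Sym2 V → ℝ) {f : V → V → ℝ}
    (hsym : ∀ x y, f x y = - f y x) (hcl : CycleLaw G r f) :
    ∃ φ : V → ℝ, ∀ x y, G.Adj x y → f x y * r s(x, y) = φ y - φ x := by
  obtain ⟨v0⟩ := hconn.nonempty
  have hw : ∀ x : V, Nonempty (G.Walk v0 x) := fun x => hconn.preconnected v0 x
  refine ⟨fun x => wsum r f (hw x).some, fun x y hadj => ?_⟩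
  have key : ∀ (z : V) (w : G.Walk v0 z), wsum r f w = wsum r f (hw z).some := by
    intro z w
    have h0 : wsum r f (w.append (hw z).some.reverse) = 0 :=
      wsum_closed r hsym hcl _ v0 _ rfl
    rw [wsum_append, wsum_reverse r hsym] at h0
    linarith
  have h1 := key y (((hw x).some).append (SimpleGraph.Walk.cons hadj SimpleGraph.Walk.nil))
  rw [wsum_append, wsum_cons, wsum_nil] at h1
  linarith

lemma S_eq_zero (hconn : G.Connected) (r : Sym2 V → ℝ) {f k : V → V → ℝ}
    (hsym : ∀ x y, f x y = - f y x) (hcl : CycleLaw G r f)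
    (hksym : ∀ x y, k x y = - k y x) (hk0 : ∀ x y, ¬ G.Adj x y → k x y = 0)
    (hknet : ∀ x : V, ∑ y : V, k x y = 0) : S G r f k = 0 := by
  obtain ⟨φ, hφ⟩ := exists_potential hconn r hsym hcl
  have h1 : S G r f k = ∑ e ∈ Eadj G, (φ e.2 - φ e.1) * k e.1 e.2 := by
    apply Finset.sum_congr rfl
    intro e he
    rw [mem_Eadj] at he
    rw [← hφ e.1 e.2 he]; ring
  have h2 : ∑ e ∈ Eadj G, (φ e.2 - φ e.1) * k e.1 e.2
      = ∑ e : V × V, (φ e.2 - φ e.1) * k e.1 e.2 := by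
    apply Finset.sum_subset (Finset.subset_univ _)
    intro e _ he
    rw [mem_Eadj] at he
    rw [hk0 e.1 e.2 he, mul_zero]
  have hA : ∀ y : V, ∑ x : V, k x y = 0 := by
    intro y
    have h3 : ∑ x : V, k x y = - ∑ x : V, k y x := by
      rw [← Finset.sum_neg_distrib]
      exact Finset.sum_congr rfl fun x _ => hksym x y
    rw [h3, hknet y, neg_zero]
  rw [h1, h2, Fintype.sum_prod_type]
  calc ∑ x : V, ∑ y : V, (φ y - φ x) * k x y
      = ∑ x : V, ((∑ y : V, φ y * k x y) - φ x * ∑ y : V, k x y) := by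
        apply Finset.sum_congr rfl; intro x _
        rw [Finset.mul_sum, ← Finset.sum_sub_distrib]
        exact Finset.sum_congr rfl fun y _ => by ring
    _ = ∑ x : V, ∑ y : V, φ y * k x y := by
        apply Finset.sum_congr rfl; intro x _; rw [hknet x]; ring
    _ = ∑ y : V, φ y * ∑ x : V, k x y := by
        rw [Finset.sum_comm]
        exact Finset.sum_congr rfl fun y _ => (Finset.mul_sum _ _ _).symm
    _ = 0 := by
        apply Finset.sum_eq_zero; intro y _; rw [hA y, mul_zero]

lemma length_filter_cons {α : Type} (p : α → Bool) (d : α) (t : List α) :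
    ((d :: t).filter p).length = (if p d then 1 else 0) + (t.filter p).length := by
  rw [List.filter_cons]
  split <;> simp [*] <;> omega

lemma sum_cnt_fst (l : List G.Dart) (x : V) :
    ∑ y : V, ((l.filter (fun d => d.toProd = (x, y))).length : ℝ)
      = ((l.filter (fun d => d.toProd.1 = x)).length : ℝ) := by
  induction l with
  | nil => simp
  | cons d t ih =>
    simp only [length_filter_cons]
    push_cast
    simp only [decide_eq_true_eq]
    rw [Finset.sum_add_distrib, ih]
    congr 1
    by_cases hx : d.toProd.1 = x
    · rw [if_pos (by simp [hx])]
      have key : ∀ y : V, (d.toProd = (x, y)) ↔ (y = d.toProd.2) := by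
        intro y
        rw [Prod.ext_iff]
        constructor
        · rintro ⟨_, h2⟩; exact h2.symm
        · intro h; exact ⟨hx, h.symm⟩
      calc ∑ y : V, (if d.toProd = (x, y) then (1:ℝ) else 0)
          = ∑ y : V, (if y = d.toProd.2 then (1:ℝ) else 0) :=
            Finset.sum_congr rfl fun y _ => if_congr (key y) rfl rfl
        _ = 1 := by simp
    · rw [if_neg (by simp [hx])]
      apply Finset.sum_eq_zero
      intro y _
      rw [if_neg]
      intro h
      exact hx (by rw [h])

lemma sum_cnt_snd (l : List G.Dart) (x : V) :
    ∑ y : V, ((l.filter (fun d => d.toProd = (y, x))).length : ℝ)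
      = ((l.filter (fun d => d.toProd.2 = x)).length : ℝ) := by
  induction l with
  | nil => simp
  | cons d t ih =>
    simp only [length_filter_cons]
    push_cast
    simp only [decide_eq_true_eq]
    rw [Finset.sum_add_distrib, ih]
    congr 1
    by_cases hx : d.toProd.2 = x
    · rw [if_pos (by simp [hx])]
      have key : ∀ y : V, (d.toProd = (y, x)) ↔ (y = d.toProd.1) := by
        intro y
        rw [Prod.ext_iff]
        constructor
        · rintro ⟨h1, _⟩; exact h1.symm
        · intro h; exact ⟨h.symm, hx⟩
      calc ∑ y : V, (if d.toProd = (y, x) then (1:ℝ) else 0)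
          = ∑ y : V, (if y = d.toProd.1 then (1:ℝ) else 0) :=
            Finset.sum_congr rfl fun y _ => if_congr (key y) rfl rfl
        _ = 1 := by simp
    · rw [if_neg (by simp [hx])]
      apply Finset.sum_eq_zero
      intro y _
      rw [if_neg]
      intro h
      exact hx (by rw [h])

lemma balance {a b : V} (w : G.Walk a b) (x : V) :
    ((w.darts.filter (fun d => d.toProd.1 = x)).length : ℝ)
      - ((w.darts.filter (fun d => d.toProd.2 = x)).length : ℝ)
      = (if x = a then 1 else 0) - (if x = b then 1 else 0) := by
  induction w with
  | nil => simp
  | cons hadj w ih =>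
    rename_i s t u
    rw [SimpleGraph.Walk.darts_cons, length_filter_cons, length_filter_cons]
    push_cast
    have h1 : ∀ c : V, (if (c = x : Bool) then (1:ℝ) else 0) = if x = c then 1 else 0 := by
      intro c; simp [eq_comm]
    simp only [h1]
    have h2 : ((SimpleGraph.Dart.mk (s, t) hadj).toProd.1) = s := rfl
    have h3 : ((SimpleGraph.Dart.mk (s, t) hadj).toProd.2) = t := rfl
    rw [h2, h3] at *
    linarith [ih]

lemma sum_count_eq_list_sum (l : List G.Dart) (g : V × V → ℝ) :
    ∑ e : V × V, ((l.filter (fun d => d.toProd = e)).length : ℝ) * g e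
      = (l.map (fun d => g d.toProd)).sum := by
  induction l with
  | nil => simp
  | cons d t ih =>
    simp only [length_filter_cons, List.map_cons, List.sum_cons]
    push_cast
    have : ∀ e : V × V, ((if (d.toProd = e : Bool) then (1:ℝ) else 0)
        + (t.filter (fun d => d.toProd = e)).length) * g e
        = (if d.toProd = e then g e else 0)
          + ((t.filter (fun d => d.toProd = e)).length : ℝ) * g e := by
      intro e
      by_cases h : d.toProd = e <;> simp [h] <;> ring
    simp only [this]
    rw [Finset.sum_add_distrib, Finset.sum_ite_eq, ih]
    simp

lemma cnt_zero (l : List G.Dart) (hl : ∀ d ∈ l, d ∈ l) {e : V × V} (he : ¬ G.Adj e.1 e.2) :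
    (l.filter (fun d => d.toProd = e)) = [] := by
  rw [List.filter_eq_nil_iff]
  intro d _
  simp only [decide_eq_true_eq]
  intro hde
  exact he (hde ▸ d.adj)

lemma forward_dir (hconn : G.Connected) (r : Sym2 V → ℝ) (hr : ∀ e ∈ G.edgeSet, 0 < r e)
    {p q : V} {I : ℝ} {f : V → V → ℝ} (hf : IsFlow G p q I f) (hcl : CycleLaw G r f) :
    ∀ g : V → V → ℝ, IsFlow G p q I g → energy G r f ≤ energy G r g := by
  intro g hg
  rw [energy_le_energy_iff r hr]
  set k : V → V → ℝ := fun x y => g x y - f x y with hk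
  have hksym : ∀ x y, k x y = - k y x := by
    intro x y; simp only [hk]; rw [hf.1 x y, hg.1 x y]; ring
  have hk0 : ∀ x y, ¬ G.Adj x y → k x y = 0 := by
    intro x y hxy; simp only [hk]; rw [hf.2.1 x y hxy, hg.2.1 x y hxy, sub_self]
  have hknet : ∀ x : V, ∑ y : V, k x y = 0 := by
    intro x
    simp only [hk]
    rw [Finset.sum_sub_distrib, net_of_isFlow hg x, net_of_isFlow hf x, sub_self]
  have hS := S_eq_zero hconn r hf.1 hcl hksym hk0 hknet
  have hQg : Q G r g = Q G r f + 2 * 1 * S G r f k + 1 ^ 2 * Q G r k := by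
    rw [← Q_expand r f k 1]
    unfold Q
    apply Finset.sum_congr rfl
    intro e _
    simp only [hk]
    ring
  have hQk := Q_nonneg r hr k
  rw [hQg, hS]
  linarith

lemma backward_dir (hconn : G.Connected) (r : Sym2 V → ℝ) (hr : ∀ e ∈ G.edgeSet, 0 < r e)
    {p q : V} {I : ℝ} {f : V → V → ℝ} (hf : IsFlow G p q I f)
    (hmin : ∀ g : V → V → ℝ, IsFlow G p q I g → energy G r f ≤ energy G r g) :
    CycleLaw G r f := by
  intro v c _
  set l := c.darts with hl
  set h : V → V → ℝ := fun x y =>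
    ((l.filter (fun d => d.toProd = (x, y))).length : ℝ)
      - ((l.filter (fun d => d.toProd = (y, x))).length : ℝ) with hh
  have hhsym : ∀ x y, h x y = - h y x := by
    intro x y; simp only [hh]; ring
  have hh0 : ∀ x y, ¬ G.Adj x y → h x y = 0 := by
    intro x y hxy
    have e1 := cnt_zero l (fun d hd => hd) (e := (x, y)) hxy
    have e2 := cnt_zero l (fun d hd => hd) (e := (y, x)) (fun ha => hxy ha.symm)
    simp only [hh, e1, e2, List.length_nil, Nat.cast_zero, sub_self]
  have hhnet : ∀ x : V, ∑ y : V, h x y = 0 := by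
    intro x
    simp only [hh]
    rw [Finset.sum_sub_distrib, sum_cnt_fst, sum_cnt_snd]
    have hb := balance c x
    rw [← hl] at hb
    rw [hb]
    simp
  -- f + t·h is a flow for every t
  have hflow : ∀ t : ℝ, IsFlow G p q I (fun x y => f x y + t * h x y) := by
    intro t
    apply isFlow_of_net
    · intro x y; rw [hf.1 x y, hhsym x y]; ring
    · intro x y hxy; rw [hf.2.1 x y hxy, hh0 x y hxy]; ring
    · intro x
      rw [Finset.sum_add_distrib, ← Finset.mul_sum, hhnet x, net_of_isFlow hf x, mul_zero,
        add_zero]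
  have hQ : ∀ t : ℝ, 0 ≤ 2 * t * S G r f h + t ^ 2 * Q G r h := by
    intro t
    have h1 := (energy_le_energy_iff r hr f _).1 (hmin _ (hflow t))
    rw [Q_expand r f h t] at h1
    linarith
  have hQh := Q_nonneg r hr h
  -- conclude S = 0
  have hS : S G r f h = 0 := by
    by_contra hne
    set a := Q G r h with ha
    set s := S G r f h with hs
    have h3 : 0 < a + 1 := by linarith
    have h2 := hQ (-s / (a + 1))
    have key : (2 * (-s / (a + 1)) * s + (-s / (a + 1)) ^ 2 * a) * (a + 1) ^ 2
        = -(s ^ 2 * (a + 2)) := by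
      field_simp
      ring
    have h6 : 0 ≤ -(s ^ 2 * (a + 2)) := by
      rw [← key]
      exact mul_nonneg h2 (by positivity)
    have h5 : 0 < s ^ 2 := by positivity
    nlinarith [h6, h5, hQh, mul_pos h5 (show (0:ℝ) < a + 2 by linarith)]
  -- S f h = 2 · (cycle sum)
  have hS2 : S G r f h
      = 2 * (l.map (fun d => f d.toProd.1 d.toProd.2 * r d.edge)).sum := by
    set g : V × V → ℝ := fun e => f e.1 e.2 * r s(e.1, e.2) with hg
    have hcA : ∑ e ∈ Eadj G, g e * ((l.filter (fun d => d.toProd = e)).length : ℝ)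
        = ∑ e : V × V, g e * ((l.filter (fun d => d.toProd = e)).length : ℝ) := by
      apply Finset.sum_subset (Finset.subset_univ _)
      intro e _ he
      rw [mem_Eadj] at he
      rw [cnt_zero l (fun d hd => hd) he]
      simp
    have hcB : ∑ e ∈ Eadj G, g e * ((l.filter (fun d => d.toProd = (e.2, e.1))).length : ℝ)
        = ∑ e : V × V, g e * ((l.filter (fun d => d.toProd = (e.2, e.1))).length : ℝ) := by
      apply Finset.sum_subset (Finset.subset_univ _)
      intro e _ he
      rw [mem_Eadj] at he
      rw [cnt_zero l (fun d hd => hd) (e := (e.2, e.1)) (fun ha => he ha.symm)]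
      simp
    have hlist : ∑ e : V × V, g e * ((l.filter (fun d => d.toProd = e)).length : ℝ)
        = (l.map (fun d => g d.toProd)).sum := by
      rw [← sum_count_eq_list_sum l g]
      exact Finset.sum_congr rfl fun e _ => mul_comm _ _
    have hswap : ∑ e : V × V, g e * ((l.filter (fun d => d.toProd = (e.2, e.1))).length : ℝ)
        = - ∑ e : V × V, g e * ((l.filter (fun d => d.toProd = e)).length : ℝ) := by
      rw [Fintype.sum_equiv (Equiv.prodComm V V)
        (fun e => g e * ((l.filter (fun d => d.toProd = (e.2, e.1))).length : ℝ))
        (fun e => g (e.2, e.1) * ((l.filter (fun d => d.toProd = e)).length : ℝ))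
        (fun e => rfl)]
      rw [← Finset.sum_neg_distrib]
      apply Finset.sum_congr rfl
      intro e _
      have hge : g (e.2, e.1) = - g e := by
        simp only [hg]
        rw [hf.1 e.2 e.1]
        have : s(e.2, e.1) = s(e.1, e.2) := Sym2.eq_swap
        rw [this]
        ring
      rw [hge]
      ring
    have hSterm : S G r f h = ∑ e ∈ Eadj G,
        (g e * ((l.filter (fun d => d.toProd = e)).length : ℝ)
          - g e * ((l.filter (fun d => d.toProd = (e.2, e.1))).length : ℝ)) := by
      unfold S
      apply Finset.sum_congr rfl
      intro e _
      simp only [hh, hg]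
      ring
    rw [hSterm, Finset.sum_sub_distrib, hcA, hcB, hlist, hswap, hlist]
    have hgd : ∀ d : G.Dart, g d.toProd = f d.toProd.1 d.toProd.2 * r d.edge := fun d => rfl
    simp only [hgd]
    ring
  have := hS2
  rw [hS] at this
  linarith

end CLME

/-- In a finite connected network, a flow of intensity `I` satisfies
Kirchhoff's cycle law if and only if it minimises the energy among all flows of
intensity `I`. -/
theorem cycleLaw_iff_minimum_energy
    {V : Type} [Fintype V] (G : SimpleGraph V) (hconn : G.Connected)
    (r : Sym2 V → ℝ) (hr : ∀ e ∈ G.edgeSet, 0 < r e)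
    (p q : V) (hpq : p ≠ q) (I : ℝ)
    (f : V → V → ℝ) (hf : IsFlow G p q I f) :
    CycleLaw G r f ↔
      ∀ g : V → V → ℝ, IsFlow G p q I g → energy G r f ≤ energy G r g := by
  constructor
  · intro hcl
    exact CLME.forward_dir hconn r hr hf hcl
  · intro hmin
    exact CLME.backward_dir hconn r hr hf hmin
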